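/- There exists a countable past-finite causal set (U,≤) that is stem-universal (every countable past-finite causal set embeds onto a stem of U) and homogeneous (every isomorphism between two finite stems of U extends to an automorphism of U). -/

import Mathlib

inductive PE : Type
  | mk : List PE → ℕ → PE

namespace PE

def ch : PE → List PE | mk l _ => l
def tag : PE → ℕ | mk _ n => n

def step (x y : PE) : Prop := x ∈ y.ch

lemma sizeOf_lt_of_step {x y : PE} (h : step x y) : sizeOf x < sizeOf y := by
  cases y with
  | mk l n =>
    have h' : x ∈ l := h
    have := List.sizeOf_lt_of_mem h'
    simp only [mk.sizeOf_spec]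
    omega

lemma sizeOf_lt_of_transGen {x y : PE} (h : Relation.TransGen step x y) :
    sizeOf x < sizeOf y := by
  induction h with
  | single h => exact sizeOf_lt_of_step h
  | tail _ h ih => exact ih.trans (sizeOf_lt_of_step h)

instance : PartialOrder PE where
  le := Relation.ReflTransGen step
  le_refl _ := Relation.ReflTransGen.refl
  le_trans _ _ _ h h' := Relation.ReflTransGen.trans h h'
  le_antisymm x y h h' := by
    rcases (Relation.reflTransGen_iff_eq_or_transGen.mp h) with rfl | h1
    · rfl
    rcases (Relation.reflTransGen_iff_eq_or_transGen.mp h') with rfl | h2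
    · rfl
    exact absurd (sizeOf_lt_of_transGen (h1.trans h2)) (lt_irrefl _)

lemma le_def {x y : PE} : x ≤ y ↔ Relation.ReflTransGen step x y := Iff.rfl

lemma lt_iff_transGen {x y : PE} : x < y ↔ Relation.TransGen step x y := by
  rw [lt_iff_le_and_ne]
  constructor
  · rintro ⟨h, hne⟩
    exact (Relation.reflTransGen_iff_eq_or_transGen.mp h).resolve_left (fun he => hne he.symm)
  · intro h
    refine ⟨h.to_reflTransGen, fun he => ?_⟩
    exact absurd (he ▸ sizeOf_lt_of_transGen h) (lt_irrefl _)

lemma step_of_mem_ch {x y : PE} (h : x ∈ y.ch) : x < y :=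
  lt_iff_transGen.mpr (Relation.TransGen.single h)

/-- decomposition of `≤` into last step -/
lemma le_iff_eq_or_exists {x : PE} {l : List PE} {n : ℕ} :
    x ≤ mk l n ↔ x = mk l n ∨ ∃ c ∈ l, x ≤ c := by
  constructor
  · intro h
    rcases Relation.ReflTransGen.cases_tail h with h | ⟨c, hc, hs⟩
    · exact Or.inl h.symm
    · exact Or.inr ⟨c, hs, hc⟩
  · rintro (rfl | ⟨c, hc, hxc⟩)
    · exact le_rfl
    · exact le_trans hxc (step_of_mem_ch hc).le

lemma past_finite : ∀ x : PE, {s : PE | s ≤ x}.Finite := by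
  have key : ∀ n (x : PE), sizeOf x ≤ n → {s : PE | s ≤ x}.Finite := by
    intro n
    induction n with
    | zero =>
      intro x hx
      cases x with
      | mk l m => simp [mk.sizeOf_spec] at hx
    | succ n ih =>
      rintro ⟨l, m⟩ hx
      have hsub : {s : PE | s ≤ mk l m} ⊆ {mk l m} ∪ ⋃ c ∈ {c | c ∈ l}, {s : PE | s ≤ c} := by
        intro s hs
        rcases le_iff_eq_or_exists.mp hs with rfl | ⟨c, hc, hsc⟩
        · exact Or.inl rfl
        · exact Or.inr (Set.mem_biUnion hc hsc)
      refine Set.Finite.subset (Set.Finite.union (Set.finite_singleton _) ?_) hsub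
      refine Set.Finite.biUnion (List.finite_toSet l) ?_
      intro c hc
      apply ih
      have h1 : sizeOf c < sizeOf l := List.sizeOf_lt_of_mem hc
      have h2 : sizeOf (mk l m) ≤ n + 1 := hx
      simp only [mk.sizeOf_spec] at h2
      omega
  exact fun x => key (sizeOf x) x le_rfl

def enc : PE → ℕ
  | mk l n => Nat.pair n (Encodable.encode (l.attach.map fun c => enc c.1))
decreasing_by
  have := List.sizeOf_lt_of_mem c.2
  simp only [mk.sizeOf_spec]
  omega

lemma enc_def (l : List PE) (n : ℕ) :
    enc (mk l n) = Nat.pair n (Encodable.encode (l.map enc)) := by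
  rw [enc]
  congr 1
  simp [List.attach_map_val]

lemma map_inj_aux : ∀ (l l' : List PE),
    (∀ a ∈ l, ∀ b, enc a = enc b → a = b) → l.map enc = l'.map enc → l = l' := by
  intro l
  induction l with
  | nil => intro l' _ h; cases l' <;> simp_all
  | cons a t ih =>
    intro l' hinj h
    cases l' with
    | nil => simp at h
    | cons b t' =>
      simp only [List.map_cons, List.cons.injEq] at h
      have h1 : a = b := hinj a (by simp) b h.1
      have h2 : t = t' := ih t' (fun x hx => hinj x (by simp [hx])) h.2
      rw [h1, h2]

lemma enc_inj : Function.Injective enc := by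
  have key : ∀ N (x y : PE), sizeOf x ≤ N → enc x = enc y → x = y := by
    intro N
    induction N with
    | zero =>
      rintro ⟨l, m⟩ y hx
      simp [mk.sizeOf_spec] at hx
    | succ N ih =>
      rintro ⟨l, m⟩ ⟨l', m'⟩ hx h
      rw [enc_def, enc_def] at h
      have h1 := Nat.pair_eq_pair.mp h
      have h2 : l.map enc = l'.map enc := Encodable.encode_injective h1.2
      have hsz : ∀ a ∈ l, sizeOf a ≤ N := by
        intro a ha
        have := List.sizeOf_lt_of_mem ha
        simp only [mk.sizeOf_spec] at hx
        omega
      have : l = l' := map_inj_aux l l' (fun a ha b hab => ih a b (hsz a ha) hab) h2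
      rw [this, h1.1]
  exact fun x y h => key (sizeOf x) x y le_rfl h

instance : Countable PE := ⟨enc, enc_inj⟩

end PE

/-- A stem (downward closed subset) of a poset. -/
def IsStemIn {U : Type*} [PartialOrder U] (A : Set U) : Prop :=
  ∀ ⦃y x : U⦄, x ∈ A → y ≤ x → y ∈ A

namespace PE

lemma spast_mk {l : List PE} {n : ℕ} (hcl : ∀ c ∈ l, ∀ s, s ≤ c → s ∈ l) :
    {s : PE | s < mk l n} = {s | s ∈ l} := by
  ext s
  simp only [Set.mem_setOf_eq]
  constructor
  · intro hs
    rcases le_iff_eq_or_exists.mp hs.le with rfl | ⟨c, hc, hsc⟩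
    · exact absurd rfl hs.ne
    · exact hcl c hc s hsc
  · intro hs
    exact step_of_mem_ch hs

lemma exists_fresh {D : Set PE} (hD : D.Finite) (hstem : IsStemIn D)
    {F : Set PE} (hF : F.Finite) :
    ∃ u : PE, u ∉ F ∧ u ∉ D ∧ {s : PE | s < u} = D := by
  obtain ⟨n, hn⟩ := (hF.image tag).infinite_compl.nonempty
  refine ⟨mk hD.toFinset.toList n, ?_, ?_, ?_⟩
  · intro hmem
    exact hn (Set.mem_image_of_mem tag hmem)
  · intro hmem
    have : (mk hD.toFinset.toList n : PE) < mk hD.toFinset.toList n := by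
      apply step_of_mem_ch
      show _ ∈ hD.toFinset.toList
      rw [Finset.mem_toList, Set.Finite.mem_toFinset]
      exact hmem
    exact lt_irrefl _ this
  · rw [spast_mk]
    · ext s; simp [Finset.mem_toList, Set.Finite.mem_toFinset]
    · intro c hc s hsc
      rw [Finset.mem_toList, Set.Finite.mem_toFinset] at hc ⊢
      exact hstem hc hsc

end PE

namespace PE

lemma le_iff_eq_or_exists_ch {x y : PE} : x ≤ y ↔ x = y ∨ ∃ c ∈ y.ch, x ≤ c := by
  cases y with
  | mk l n => exact le_iff_eq_or_exists

lemma lt_iff_exists_ch {x y : PE} : x < y ↔ ∃ c ∈ y.ch, x ≤ c := by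
  constructor
  · intro h
    exact (le_iff_eq_or_exists_ch.mp h.le).resolve_left h.ne
  · rintro ⟨c, hc, hxc⟩
    exact lt_of_le_of_lt hxc (step_of_mem_ch hc)

section Universality

variable {C : Type} [PartialOrder C]

lemma universality (hp : ∀ x : C, {s : C | s ≤ x}.Finite) (hc : Countable C) :
    ∃ f : C ↪o PE, ∀ (u : PE) (c : C), u ≤ f c → ∃ c' : C, f c' = u := by
  obtain ⟨g, hg⟩ := exists_injective_nat C
  have hps : ∀ c : C, {s : C | s < c}.Finite :=
    fun c => (hp c).subset (fun s hs => le_of_lt hs)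
  -- well-foundedness of < on C
  have hmono : ∀ {x c : C}, x < c → (hps x).toFinset.card < (hps c).toFinset.card := by
    intro x c hxc
    apply Finset.card_lt_card
    rw [Finset.ssubset_iff_of_subset]
    · exact ⟨x, (Set.Finite.mem_toFinset _).mpr hxc, by
        simp only [Set.Finite.mem_toFinset, Set.mem_setOf_eq]; exact lt_irrefl x⟩
    · intro s hs
      rw [Set.Finite.mem_toFinset] at *
      exact lt_trans hs hxc
  have wf : WellFounded ((· < ·) : C → C → Prop) :=
    Subrelation.wf (r := InvImage (· < ·) (fun c => (hps c).toFinset.card))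
      (fun {x y} h => hmono h) (InvImage.wf _ Nat.lt_wfRel.wf)
  -- the embedding via well-founded recursion
  set F : C → PE := wf.fix (fun c ih =>
    PE.mk (((hps c).toFinset.attach.toList).map
      (fun x => ih x.1 ((hps c).mem_toFinset.mp x.2))) (g c)) with hF
  have Feq : ∀ c, F c = PE.mk (((hps c).toFinset.attach.toList).map (fun x => F x.1)) (g c) := by
    intro c
    rw [hF]
    conv_lhs => rw [WellFounded.fix_eq]
  have mem_ch_F : ∀ (c : C) (y : PE), y ∈ (F c).ch ↔ ∃ x : C, x < c ∧ F x = y := by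
    intro c y
    rw [Feq c]
    show y ∈ List.map _ _ ↔ _
    rw [List.mem_map]
    constructor
    · rintro ⟨x, hx, rfl⟩
      exact ⟨x.1, (hps c).mem_toFinset.mp x.2, rfl⟩
    · rintro ⟨x, hx, rfl⟩
      exact ⟨⟨x, (hps c).mem_toFinset.mpr hx⟩, by simp [Finset.mem_toList], rfl⟩
  have tagF : ∀ c, (F c).tag = g c := by
    intro c; rw [Feq c]; rfl
  have Finj : Function.Injective F := by
    intro x y h
    apply hg
    rw [← tagF, ← tagF, h]
  have Fmono : ∀ {x c : C}, x < c → F x < F c := by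
    intro x c h
    exact step_of_mem_ch ((mem_ch_F c (F x)).mpr ⟨x, h, rfl⟩)
  have spastF : ∀ c : C, {s : PE | s < F c} = F '' {x : C | x < c} := by
    intro c
    induction c using wf.induction with
    | _ c ih =>
      ext s
      simp only [Set.mem_setOf_eq, Set.mem_image]
      constructor
      · intro hs
        obtain ⟨y, hy, hsy⟩ := lt_iff_exists_ch.mp hs
        obtain ⟨x, hxc, rfl⟩ := (mem_ch_F c y).mp hy
        rcases eq_or_lt_of_le hsy with rfl | hslt
        · exact ⟨x, hxc, rfl⟩
        · have := ih x hxc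
          have hsm : s ∈ F '' {w : C | w < x} := by rw [← this]; exact hslt
          obtain ⟨w, hw, rfl⟩ := hsm
          exact ⟨w, lt_trans hw hxc, rfl⟩
      · rintro ⟨x, hx, rfl⟩
        exact Fmono hx
  have hiff : ∀ {x c : C}, F x ≤ F c ↔ x ≤ c := by
    intro x c
    constructor
    · intro h
      rcases eq_or_lt_of_le h with he | hlt
      · exact le_of_eq (Finj he)
      · have : F x ∈ F '' {w : C | w < c} := by rw [← spastF c]; exact hlt
        obtain ⟨w, hw, he⟩ := this
        exact le_of_lt (Finj he ▸ hw)
    · intro h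
      rcases eq_or_lt_of_le h with rfl | hlt
      · exact le_rfl
      · exact (Fmono hlt).le
  refine ⟨OrderEmbedding.ofMapLEIff F (fun _ _ => hiff), ?_⟩
  intro u c hu
  rcases eq_or_lt_of_le hu with rfl | hlt
  · exact ⟨c, rfl⟩
  · have : u ∈ F '' {w : C | w < c} := by rw [← spastF c]; exact hlt
    obtain ⟨w, _, rfl⟩ := this
    exact ⟨w, rfl⟩

end Universality

end PE

namespace PE

structure PIso where
  s : Set (PE × PE)
  fin : s.Finite
  func : ∀ p ∈ s, ∀ q ∈ s, (p.1 = q.1 ↔ p.2 = q.2)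
  mono : ∀ p ∈ s, ∀ q ∈ s, (p.1 ≤ q.1 ↔ p.2 ≤ q.2)
  stemA : IsStemIn (Prod.fst '' s)
  stemB : IsStemIn (Prod.snd '' s)

namespace PIso

def dom (P : PIso) : Set PE := Prod.fst '' P.s
def ran (P : PIso) : Set PE := Prod.snd '' P.s

lemma dom_fin (P : PIso) : P.dom.Finite := P.fin.image _
lemma ran_fin (P : PIso) : P.ran.Finite := P.fin.image _

def symm (P : PIso) : PIso where
  s := {p : PE × PE | (p.2, p.1) ∈ P.s}
  fin := by
    have : {p : PE × PE | (p.2, p.1) ∈ P.s} = Prod.swap '' P.s := by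
      ext p
      constructor
      · intro hp; exact ⟨(p.2, p.1), hp, rfl⟩
      · rintro ⟨q, hq, rfl⟩; exact hq
    rw [this]
    exact P.fin.image _
  func p hp q hq := (P.func _ hp _ hq).symm
  mono p hp q hq := (P.mono _ hp _ hq).symm
  stemA := by
    have : Prod.fst '' {p : PE × PE | (p.2, p.1) ∈ P.s} = Prod.snd '' P.s := by
      ext x
      constructor
      · rintro ⟨q, hq, rfl⟩; exact ⟨(q.2, q.1), hq, rfl⟩
      · rintro ⟨q, hq, rfl⟩; exact ⟨(q.2, q.1), by simpa using hq, rfl⟩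
    rw [this]; exact P.stemB
  stemB := by
    have : Prod.snd '' {p : PE × PE | (p.2, p.1) ∈ P.s} = Prod.fst '' P.s := by
      ext x
      constructor
      · rintro ⟨q, hq, rfl⟩; exact ⟨(q.2, q.1), hq, rfl⟩
      · rintro ⟨q, hq, rfl⟩; exact ⟨(q.2, q.1), by simpa using hq, rfl⟩
    rw [this]; exact P.stemA

lemma symm_s (P : PIso) : P.symm.s = {p : PE × PE | (p.2, p.1) ∈ P.s} := rfl

lemma symm_dom (P : PIso) : P.symm.dom = P.ran := by
  unfold dom ran
  rw [symm_s]
  ext x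
  constructor
  · rintro ⟨q, hq, rfl⟩; exact ⟨(q.2, q.1), hq, rfl⟩
  · rintro ⟨q, hq, rfl⟩; exact ⟨(q.2, q.1), by simpa using hq, rfl⟩

lemma symm_ran (P : PIso) : P.symm.ran = P.dom := by
  unfold dom ran
  rw [symm_s]
  ext x
  constructor
  · rintro ⟨q, hq, rfl⟩; exact ⟨(q.2, q.1), hq, rfl⟩
  · rintro ⟨q, hq, rfl⟩; exact ⟨(q.2, q.1), by simpa using hq, rfl⟩

end PIso

end PE

namespace PE
namespace PIso

lemma extend_one (P : PIso) (z : PE) (hz : {s : PE | s < z} ⊆ P.dom) (hzd : z ∉ P.dom) :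
    ∃ P' : PIso, P.s ⊆ P'.s ∧ P'.dom = insert z P.dom := by
  classical
  set D : Set PE := Prod.snd '' (P.s ∩ {p | p.1 < z}) with hD
  have hDran : D ⊆ P.ran := by
    rintro b ⟨p, hp, he⟩
    exact ⟨p, hp.1, he⟩
  have hDfin : D.Finite := (P.fin.subset Set.inter_subset_left).image _
  have hDstem : IsStemIn D := by
    rintro v b ⟨p, ⟨hps, hplt⟩, rfl⟩ hvb
    have hvran : v ∈ P.ran := P.stemB ⟨p, hps, rfl⟩ hvb
    obtain ⟨q, hq, rfl⟩ := hvran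
    have hle : q.1 ≤ p.1 := (P.mono q hq p hps).mpr hvb
    exact ⟨q, ⟨hq, lt_of_le_of_lt hle hplt⟩, rfl⟩
  obtain ⟨u, huR, huD, huS⟩ := exists_fresh hDfin hDstem P.ran_fin
  have hbD : ∀ {a b : PE}, (a, b) ∈ P.s → (a < z ↔ b ∈ D) := by
    intro a b hab
    constructor
    · intro h; exact ⟨(a, b), ⟨hab, h⟩, rfl⟩
    · rintro ⟨p, ⟨hps, hplt⟩, he⟩
      have : p.1 = a := (P.func p hps (a, b) hab).mpr he
      exact this ▸ hplt
  refine ⟨⟨insert (z, u) P.s, P.fin.insert _, ?_, ?_, ?_, ?_⟩, Set.subset_insert _ _, ?_⟩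
  · -- func
    rintro p (rfl | hp) q (rfl | hq)
    · exact ⟨fun _ => rfl, fun _ => rfl⟩
    · constructor
      · intro h; exact absurd ⟨q, hq, h.symm⟩ hzd
      · intro h; exact absurd ⟨q, hq, h.symm⟩ huR
    · constructor
      · intro h; exact absurd ⟨p, hp, h⟩ hzd
      · intro h; exact absurd ⟨p, hp, h⟩ huR
    · exact P.func p hp q hq
  · -- mono
    rintro p (rfl | hp) q (rfl | hq)
    · exact ⟨fun _ => le_rfl, fun _ => le_rfl⟩
    · constructor
      · intro h; exact absurd (P.stemA ⟨q, hq, rfl⟩ h) hzd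
      · intro h; exact absurd (P.stemB ⟨q, hq, rfl⟩ h) huR
    · -- p old, q = (z,u) : p.1 ≤ z ↔ p.2 ≤ u
      obtain ⟨a, b⟩ := p
      have hane : a ≠ z := fun he => hzd (he ▸ ⟨(a, b), hp, rfl⟩)
      have hbne : b ≠ u := fun he => huR (he ▸ ⟨(a, b), hp, rfl⟩)
      show a ≤ z ↔ b ≤ u
      constructor
      · intro h
        have h1 : b ∈ D := (hbD hp).mp (lt_of_le_of_ne h hane)
        have h2 : b ∈ {s : PE | s < u} := by rw [huS]; exact h1
        exact le_of_lt h2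
      · intro h
        have hblt : b ∈ {s : PE | s < u} := lt_of_le_of_ne h hbne
        have : b ∈ D := by rw [← huS]; exact hblt
        exact ((hbD hp).mpr this).le
    · exact P.mono p hp q hq
  · -- stemA
    rw [Set.image_insert_eq]
    intro v x hx hvx
    rcases hx with rfl | hx
    · rcases eq_or_lt_of_le hvx with rfl | hlt
      · exact Set.mem_insert _ _
      · exact Set.mem_insert_of_mem _ (hz hlt)
    · exact Set.mem_insert_of_mem _ (P.stemA hx hvx)
  · -- stemB
    rw [Set.image_insert_eq]
    intro v x hx hvx
    rcases hx with rfl | hx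
    · rcases eq_or_lt_of_le hvx with rfl | hlt
      · exact Set.mem_insert _ _
      · have hlt' : v ∈ {s : PE | s < x} := hlt
        have : v ∈ D := by rw [← huS]; exact hlt'
        exact Set.mem_insert_of_mem _ (hDran this)
    · exact Set.mem_insert_of_mem _ (P.stemB hx hvx)
  · show Prod.fst '' insert (z, u) P.s = insert z P.dom
    rw [Set.image_insert_eq]
    rfl

end PIso
end PE

namespace PE
namespace PIso

lemma extend_dom (P : PIso) (x : PE) : ∃ P' : PIso, P.s ⊆ P'.s ∧ x ∈ P'.dom := by
  classical
  have hfin : ∀ Q : PIso, ({s : PE | s ≤ x} \ Q.dom).Finite :=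
    fun Q => (past_finite x).subset Set.diff_subset
  suffices main : ∀ (n : ℕ) (Q : PIso), (hfin Q).toFinset.card ≤ n →
      ∃ P' : PIso, Q.s ⊆ P'.s ∧ x ∈ P'.dom by
    exact main _ P le_rfl
  intro n
  induction n with
  | zero =>
    intro Q hcard
    by_cases hx : x ∈ Q.dom
    · exact ⟨Q, subset_rfl, hx⟩
    · exfalso
      have hxT : x ∈ (hfin Q).toFinset := by
        rw [Set.Finite.mem_toFinset]
        exact ⟨(show x ∈ {s : PE | s ≤ x} from le_refl x), hx⟩
      have := Finset.card_pos.mpr ⟨x, hxT⟩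
      omega
  | succ n ih =>
    intro Q hcard
    by_cases hx : x ∈ Q.dom
    · exact ⟨Q, subset_rfl, hx⟩
    have hne : ((hfin Q).toFinset).Nonempty := ⟨x, by
      rw [Set.Finite.mem_toFinset]; exact ⟨(show x ∈ {s : PE | s ≤ x} from le_refl x), hx⟩⟩
    obtain ⟨z, hzT, hzmin'⟩ := Finset.exists_minimal hne
    have hzT : z ∈ (hfin Q).toFinset := hzT
    have hzmin : ∀ w ∈ (hfin Q).toFinset, ¬ w < z :=
      fun w hw hlt => lt_irrefl _ (lt_of_lt_of_le hlt (hzmin' hw hlt.le))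
    rw [Set.Finite.mem_toFinset] at hzT
    obtain ⟨hzx, hzd⟩ := hzT
    have hzx' : z ≤ x := hzx
    have hspast : {s : PE | s < z} ⊆ Q.dom := by
      intro w hw
      by_contra hwd
      exact hzmin w (by rw [Set.Finite.mem_toFinset]; exact ⟨(show w ∈ {s : PE | s ≤ x} from le_trans hw.le hzx'), hwd⟩) hw
    obtain ⟨P1, hsub1, hdom1⟩ := Q.extend_one z hspast hzd
    have hcard1 : (hfin P1).toFinset.card ≤ n := by
      have hss : (hfin P1).toFinset ⊂ (hfin Q).toFinset := by
        rw [Set.Finite.toFinset_ssubset_toFinset]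
        constructor
        · intro s hs
          refine ⟨hs.1, fun hsd => hs.2 ?_⟩
          rw [hdom1]
          exact Set.mem_insert_of_mem _ hsd
        · intro hsub
          have : z ∈ {s : PE | s ≤ x} \ P1.dom := hsub ⟨hzx, hzd⟩
          exact this.2 (by rw [hdom1]; exact Set.mem_insert _ _)
      have := Finset.card_lt_card hss
      omega
    obtain ⟨P', hsub2, hx'⟩ := ih P1 hcard1
    exact ⟨P', subset_trans hsub1 hsub2, hx'⟩

lemma extend_ran (P : PIso) (y : PE) : ∃ P' : PIso, P.s ⊆ P'.s ∧ y ∈ P'.ran := by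
  obtain ⟨Q, hsub, hy⟩ := P.symm.extend_dom y
  refine ⟨Q.symm, ?_, ?_⟩
  · intro p hp
    have : (p.2, p.1) ∈ P.symm.s := hp
    have : (p.2, p.1) ∈ Q.s := hsub this
    exact this
  · rwa [symm_ran]

lemma extend_both (P : PIso) (x : PE) :
    ∃ P' : PIso, P.s ⊆ P'.s ∧ x ∈ P'.dom ∧ x ∈ P'.ran := by
  obtain ⟨P1, h1, hd⟩ := P.extend_dom x
  obtain ⟨P2, h2, hr⟩ := P1.extend_ran x
  refine ⟨P2, subset_trans h1 h2, ?_, hr⟩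
  obtain ⟨p, hp, he⟩ := hd
  exact ⟨p, h2 hp, he⟩

end PIso
end PE

namespace PE

instance : Nonempty PE := ⟨mk [] 0⟩

lemma homogeneity (A B : Set PE) (hAf : A.Finite) (hBf : B.Finite)
    (hA : IsStemIn A) (hB : IsStemIn B) (e : A ≃o B) :
    ∃ g : PE ≃o PE, ∀ a : A, g a = (e a : PE) := by
  classical
  have : Finite A := hAf.to_subtype
  set S0 : Set (PE × PE) := Set.range (fun a : A => ((a : PE), (e a : PE))) with hS0
  have hdom0 : Prod.fst '' S0 = A := by
    ext x
    constructor
    · rintro ⟨p, ⟨a, rfl⟩, rfl⟩; exact a.2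
    · intro hx; exact ⟨((⟨x, hx⟩ : A), (e ⟨x, hx⟩ : PE)), ⟨⟨x, hx⟩, rfl⟩, rfl⟩
  have hran0 : Prod.snd '' S0 = B := by
    ext y
    constructor
    · rintro ⟨p, ⟨a, rfl⟩, rfl⟩; exact (e a).2
    · intro hy
      obtain ⟨a, ha⟩ := e.surjective ⟨y, hy⟩
      exact ⟨((a : PE), (e a : PE)), ⟨a, rfl⟩, by rw [ha]⟩
  obtain ⟨P0, hP0s⟩ : ∃ P : PIso, P.s = S0 := by
    refine ⟨⟨S0, Set.finite_range _, ?_, ?_, ?_, ?_⟩, rfl⟩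
    · rintro p ⟨a, rfl⟩ q ⟨a', rfl⟩
      show (a : PE) = (a' : PE) ↔ ((e a : PE) = (e a' : PE))
      rw [Subtype.coe_inj, Subtype.coe_inj]
      exact ⟨fun h => by rw [h], fun h => e.injective h⟩
    · rintro p ⟨a, rfl⟩ q ⟨a', rfl⟩
      show (a : PE) ≤ (a' : PE) ↔ ((e a : PE) ≤ (e a' : PE))
      rw [Subtype.coe_le_coe, Subtype.coe_le_coe]
      exact (e.le_iff_le).symm
    · exact hdom0 ▸ hA
    · exact hran0 ▸ hB
  obtain ⟨d, hd⟩ := exists_surjective_nat PE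
  set Q : ℕ → PIso := fun n => Nat.rec P0 (fun n Pn => (Pn.extend_both (d n)).choose) n
    with hQ
  have Qsucc : ∀ n, (Q n).s ⊆ (Q (n+1)).s ∧ d n ∈ (Q (n+1)).dom ∧ d n ∈ (Q (n+1)).ran :=
    fun n => ((Q n).extend_both (d n)).choose_spec
  have Qmono : ∀ {m n : ℕ}, m ≤ n → (Q m).s ⊆ (Q n).s := by
    intro m n h
    induction h with
    | refl => exact subset_rfl
    | step _ ih => exact ih.trans (Qsucc _).1
  have hdomall : ∀ x : PE, ∃ b : PE, ∃ n, (x, b) ∈ (Q n).s := by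
    intro x
    obtain ⟨k, rfl⟩ := hd x
    obtain ⟨⟨a, b⟩, hp, he⟩ := (Qsucc k).2.1
    dsimp at he
    subst he
    exact ⟨b, k + 1, hp⟩
  have hranall : ∀ y : PE, ∃ a : PE, ∃ n, (a, y) ∈ (Q n).s := by
    intro y
    obtain ⟨k, rfl⟩ := hd y
    obtain ⟨⟨a, b⟩, hp, he⟩ := (Qsucc k).2.2
    dsimp at he
    subst he
    exact ⟨a, k + 1, hp⟩
  have func2 : ∀ {m n : ℕ} {a b a' b' : PE}, (a, b) ∈ (Q m).s → (a', b') ∈ (Q n).s →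
      (a = a' ↔ b = b') := by
    intro m n a b a' b' h1 h2
    exact (Q (max m n)).func _ (Qmono (le_max_left m n) h1) _ (Qmono (le_max_right m n) h2)
  have mono2 : ∀ {m n : ℕ} {a b a' b' : PE}, (a, b) ∈ (Q m).s → (a', b') ∈ (Q n).s →
      (a ≤ a' ↔ b ≤ b') := by
    intro m n a b a' b' h1 h2
    exact (Q (max m n)).mono _ (Qmono (le_max_left m n) h1) _ (Qmono (le_max_right m n) h2)
  set g : PE → PE := fun x => (hdomall x).choose with hgdef
  have hg : ∀ x, ∃ n, (x, g x) ∈ (Q n).s := fun x => (hdomall x).choose_spec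
  set g' : PE → PE := fun y => (hranall y).choose with hgdef'
  have hg' : ∀ y, ∃ n, (g' y, y) ∈ (Q n).s := fun y => (hranall y).choose_spec
  have hleft : ∀ x, g' (g x) = x := by
    intro x
    obtain ⟨n, h1⟩ := hg x
    obtain ⟨m, h2⟩ := hg' (g x)
    exact (func2 h2 h1).mpr rfl
  have hright : ∀ y, g (g' y) = y := by
    intro y
    obtain ⟨n, h2⟩ := hg' y
    obtain ⟨m, h1⟩ := hg (g' y)
    exact (func2 h1 h2).mp rfl
  have hmono : ∀ x y : PE, g x ≤ g y ↔ x ≤ y := by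
    intro x y
    obtain ⟨n, h1⟩ := hg x
    obtain ⟨m, h2⟩ := hg y
    exact (mono2 h1 h2).symm
  refine ⟨{ toFun := g, invFun := g', left_inv := hleft, right_inv := hright,
            map_rel_iff' := @fun x y => hmono x y }, ?_⟩
  intro a
  obtain ⟨n, h1⟩ := hg (a : PE)
  have h0 : ((a : PE), (e a : PE)) ∈ (Q 0).s := by
    show _ ∈ P0.s
    rw [hP0s]
    exact ⟨a, rfl⟩
  exact (func2 (n := 0) h1 h0).mp rfl

end PE

/-- There exists a countable past-finite causal set that is
stem-universal and homogeneous. -/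
theorem stmt_14 : ∃ (U : Type) (_ : PartialOrder U), Countable U ∧
    (∀ x : U, {s : U | s ≤ x}.Finite) ∧
    (∀ (C : Type) (_ : PartialOrder C), Countable C →
      (∀ x : C, {s : C | s ≤ x}.Finite) →
      ∃ f : C ↪o U, ∀ (u : U) (c : C), u ≤ f c → ∃ c' : C, f c' = u) ∧
    (∀ (A B : Set U), A.Finite → B.Finite → IsStemIn A → IsStemIn B →
      ∀ e : A ≃o B, ∃ g : U ≃o U, ∀ a : A, g a = (e a : U)) := by
  refine ⟨PE, inferInstance, inferInstance, PE.past_finite, ?_, ?_⟩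
  · intro C instC hc hp
    exact PE.universality hp hc
  · intro A B hAf hBf hA hB e
    exact PE.homogeneity A B hAf hBf hA hB e
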